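/- For every n ∈ ℕ and every n-ary Boolean function f : Bool^n → Bool, there exists an instruction sequence X ∈ IS_br^na in which no forward jump instruction occurs, such that X computes f and psize(X) ≤ c·(n·2^n + 1), where c is a constant independent of n and f. -/

import Mathlib

/-- Boolean register names: `inp i` is input register `in:(i+1)`,
`aux i` is auxiliary register `aux:(i+1)`, `out` is the output register. -/
inductive Reg where
  | inp : ℕ → Reg
  | aux : ℕ → Reg
  | out : Reg
deriving DecidableEq

/-- Basic instructions: register reads/writes, and (for splitting instruction
sequences) `split p` and `reply p` for Boolean parameters `p`. -/
inductive BInstr where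
  | get : Reg → BInstr
  | set : Reg → Bool → BInstr
  | split : ℕ → BInstr
  | reply : ℕ → BInstr
deriving DecidableEq

/-- Primitive instructions. -/
inductive PInstr where
  | plain : BInstr → PInstr
  | pos : BInstr → PInstr
  | neg : BInstr → PInstr
  | jump : ℕ → PInstr
  | halt : PInstr
deriving DecidableEq

abbrev RegState := Reg → Bool

/-- State change caused by processing a basic instruction. -/
def BInstr.effect : BInstr → RegState → RegState
  | .set r b, s => Function.update s r b
  | _, s => s

/-- Reply produced by processing a basic instruction. -/
def BInstr.rpl : BInstr → RegState → Bool
  | .get r, s => s r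
  | .set _ b, _ => b
  | _, _ => false

def BInstr.isSplitReply : BInstr → Bool
  | .split _ => true
  | .reply _ => true
  | _ => false

/-- Single-thread execution of an instruction sequence on Boolean registers;
`none` means deadlock, `some s` means termination in register state `s`.
(`split`/`reply` instructions make no sense here and deadlock.) -/
def exec : List PInstr → RegState → Option RegState
  | [], _ => none
  | .plain a :: X, s =>
      if a.isSplitReply then none else exec X (a.effect s)
  | .pos a :: X, s =>
      if a.isSplitReply then none
      else if a.rpl s then exec X (a.effect s) else exec (X.drop 1) (a.effect s)
  | .neg a :: X, s =>
      if a.isSplitReply then none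
      else if a.rpl s then exec (X.drop 1) (a.effect s) else exec X (a.effect s)
  | .jump 0 :: _, _ => none
  | .jump (l+1) :: X, s => exec (X.drop l) s
  | .halt :: _, s => some s
termination_by X _ => X.length
decreasing_by all_goals (simp only [List.length_drop, List.length_cons]; omega)

/-- Initial register state: input registers `in:1 .. in:n` contain
`b 0, ..., b (n-1)`; all other registers contain `false`. -/
def initState (n : ℕ) (b : Fin n → Bool) : RegState := fun r =>
  match r with
  | .inp i => if h : i < n then b ⟨i, h⟩ else false
  | _ => false

/-- `X` computes the `n`-ary Boolean function `f`: for every input, execution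
terminates (does not deadlock) with the output register containing `f b`. -/
def Computes {n : ℕ} (f : (Fin n → Bool) → Bool) (X : List PInstr) : Prop :=
  ∀ b : Fin n → Bool, ∃ s : RegState,
    exec X (initState n b) = some s ∧ s Reg.out = f b

/-- Basic instructions allowed in `IS_br`. -/
def BrBasic : BInstr → Prop
  | .get (.inp _) => True
  | .get (.aux _) => True
  | .set (.aux _) _ => True
  | .set .out _ => True
  | _ => False

/-- Basic instructions allowed in `IS_br^na`. -/
def NaBasic : BInstr → Prop
  | .get (.inp _) => True
  | .set .out _ => True
  | _ => False

def InstrBasicOK (P : BInstr → Prop) : PInstr → Prop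
  | .plain a => P a
  | .pos a => P a
  | .neg a => P a
  | _ => True

/-- Membership of `IS_br` (non-empty, only allowed basic instructions). -/
def ISbr (X : List PInstr) : Prop :=
  X ≠ [] ∧ ∀ u ∈ X, InstrBasicOK BrBasic u

/-- Membership of `IS_br^na`. -/
def ISbrna (X : List PInstr) : Prop :=
  X ≠ [] ∧ ∀ u ∈ X, InstrBasicOK NaBasic u

/-- The primitive instruction contains the basic instruction `out.set:false`. -/
def UsesOutSetFalse : PInstr → Prop
  | .plain (.set .out false) => True
  | .pos (.set .out false) => True
  | .neg (.set .out false) => True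
  | _ => False

/-- The class PLIS of Boolean function families computable by
polynomial-length instruction sequences from `IS_br`. -/
def PLIS (F : (n : ℕ) → (Fin n → Bool) → Bool) : Prop :=
  ∃ h : Polynomial ℕ, ∀ n : ℕ, ∃ X : List PInstr,
    ISbr X ∧ Computes (F n) X ∧ X.length ≤ h.eval n

-- AUX START
namespace S2

/-- Test instruction: on match with `v`, skip one; on mismatch, proceed. -/
def testI (i : ℕ) (v : Bool) : PInstr :=
  if v then .neg (.get (.inp i)) else .pos (.get (.inp i))

/-- Always-skip instruction writing `false` to out. -/
def fixI : PInstr := .pos (.set .out false)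

/-- Always-skip instruction writing `v` to out. -/
def setI (v : Bool) : PInstr :=
  if v then .neg (.set .out true) else .pos (.set .out false)

lemma exec_testI (i : ℕ) (v : Bool) (X : List PInstr) (s : RegState) :
    exec (testI i v :: X) s =
      if s (.inp i) = v then exec (X.drop 1) s else exec X s := by
  cases v <;>
    simp [testI, exec, BInstr.isSplitReply, BInstr.rpl, BInstr.effect] <;>
    cases h : s (Reg.inp i) <;> simp [h]

lemma exec_fixI (x : PInstr) (X : List PInstr) (s : RegState) :
    exec (fixI :: x :: X) s = exec X (Function.update s .out false) := by
  simp [fixI, exec, BInstr.isSplitReply, BInstr.rpl, BInstr.effect]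

lemma exec_setI (v : Bool) (x : PInstr) (X : List PInstr) (s : RegState) :
    exec (setI v :: x :: X) s = exec X (Function.update s .out v) := by
  cases v <;>
    simp [setI, exec, BInstr.isSplitReply, BInstr.rpl, BInstr.effect]

lemma exec_halt (X : List PInstr) (s : RegState) :
    exec (.halt :: X) s = some s := by simp [exec]

def core (L : List (ℕ × Bool)) : List PInstr :=
  (L.map (fun p => [testI p.1 p.2, fixI])).flatten

@[simp] lemma core_nil : core [] = [] := rfl

@[simp] lemma core_cons (p : ℕ × Bool) (L : List (ℕ × Bool)) :
    core (p :: L) = testI p.1 p.2 :: fixI :: core L := rfl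

lemma core_match (L : List (ℕ × Bool)) (tail : List PInstr) (s : RegState)
    (h : ∀ p ∈ L, s (.inp p.1) = p.2) :
    exec (core L ++ tail) s = exec tail s := by
  induction L with
  | nil => simp
  | cons p L ih =>
    rw [core_cons, List.cons_append, List.cons_append, exec_testI,
      if_pos (h p (by simp))]
    simpa using ih (fun q hq => h q (by simp [hq]))

lemma chain (L : List (ℕ × Bool)) (v : Bool) (rest : List PInstr) (s : RegState) :
    exec (fixI :: (core L ++ setI v :: fixI :: .halt :: rest)) s =
      exec rest (Function.update s .out false) := by
  induction L generalizing s with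
  | nil =>
    simp only [core_nil, List.nil_append]
    rw [exec_fixI, exec_fixI, Function.update_idem]
  | cons p L ih =>
    rw [core_cons]
    rw [show (testI p.1 p.2 :: fixI :: core L ++ setI v :: fixI :: PInstr.halt :: rest)
        = testI p.1 p.2 :: (fixI :: (core L ++ setI v :: fixI :: PInstr.halt :: rest)) by simp]
    rw [exec_fixI, ih, Function.update_idem]

lemma core_mismatch (L : List (ℕ × Bool)) (v : Bool) (rest : List PInstr) (s : RegState)
    (h : ∃ p ∈ L, s (.inp p.1) ≠ p.2) :
    exec (core L ++ setI v :: fixI :: .halt :: rest) s =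
      exec rest (Function.update s .out false) := by
  induction L with
  | nil => simp at h
  | cons p L ih =>
    rw [core_cons, List.cons_append, List.cons_append, exec_testI]
    by_cases hp : s (.inp p.1) = p.2
    · rw [if_pos hp]
      simp only [List.drop_one, List.tail_cons]
      apply ih
      rcases h with ⟨q, hq, hq2⟩
      rcases List.mem_cons.mp hq with rfl | hq
      · exact absurd hp hq2
      · exact ⟨q, hq, hq2⟩
    · rw [if_neg hp]
      exact chain L v rest s

lemma block_match (L : List (ℕ × Bool)) (v : Bool) (rest : List PInstr) (s : RegState)
    (h : ∀ p ∈ L, s (.inp p.1) = p.2) :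
    exec (core L ++ setI v :: fixI :: .halt :: rest) s =
      some (Function.update s .out v) := by
  rw [core_match L _ s h, exec_setI, exec_halt]

def pairsOf {n : ℕ} (a : Fin n → Bool) : List (ℕ × Bool) :=
  (List.finRange n).map (fun i => (i.1, a i))

def blockOf {n : ℕ} (f : (Fin n → Bool) → Bool) (a : Fin n → Bool) : List PInstr :=
  core (pairsOf a) ++ [setI (f a), fixI, .halt]

def prog {n : ℕ} (f : (Fin n → Bool) → Bool) (as : List (Fin n → Bool)) : List PInstr :=
  (as.map (blockOf f)).flatten

@[simp] lemma prog_nil {n : ℕ} (f : (Fin n → Bool) → Bool) : prog f [] = [] := rfl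

@[simp] lemma prog_cons {n : ℕ} (f : (Fin n → Bool) → Bool) (a : Fin n → Bool)
    (as : List (Fin n → Bool)) : prog f (a :: as) = blockOf f a ++ prog f as := rfl

lemma prog_exec {n : ℕ} (f : (Fin n → Bool) → Bool) (as : List (Fin n → Bool))
    (b : Fin n → Bool) (hb : b ∈ as) (s : RegState)
    (hs : ∀ i : Fin n, s (.inp i.1) = b i) :
    ∃ s' : RegState, exec (prog f as) s = some s' ∧ s' Reg.out = f b := by
  induction as generalizing s with
  | nil => simp at hb
  | cons a as ih =>
    rw [prog_cons, blockOf]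
    rw [show (core (pairsOf a) ++ [setI (f a), fixI, PInstr.halt]) ++ prog f as
        = core (pairsOf a) ++ setI (f a) :: fixI :: PInstr.halt :: prog f as by simp]
    by_cases hab : a = b
    · subst hab
      rw [block_match]
      · exact ⟨_, rfl, by simp⟩
      · rintro p hp
        simp only [pairsOf, List.mem_map, List.mem_finRange] at hp
        obtain ⟨i, -, rfl⟩ := hp
        exact hs i
    · have hmis : ∃ p ∈ pairsOf a, s (.inp p.1) ≠ p.2 := by
        obtain ⟨i, hi⟩ := Function.ne_iff.mp hab
        refine ⟨(i.1, a i), ?_, by rw [hs i]; exact fun h => hi h.symm⟩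
        simp only [pairsOf, List.mem_map]
        exact ⟨i, List.mem_finRange i, rfl⟩
      rw [core_mismatch _ _ _ _ hmis]
      have hb' : b ∈ as := by
        rcases List.mem_cons.mp hb with rfl | h
        · exact absurd rfl hab
        · exact h
      exact ih hb' _ (fun i => by
        rw [Function.update_of_ne (by simp) _ s]; exact hs i)

lemma good_testI (i : ℕ) (v : Bool) :
    InstrBasicOK NaBasic (testI i v) ∧ ∀ l, testI i v ≠ .jump l := by
  cases v <;> simp [testI, InstrBasicOK, NaBasic]

lemma good_fixI : InstrBasicOK NaBasic fixI ∧ ∀ l, fixI ≠ .jump l := by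
  simp [fixI, InstrBasicOK, NaBasic]

lemma good_setI (v : Bool) :
    InstrBasicOK NaBasic (setI v) ∧ ∀ l, setI v ≠ .jump l := by
  cases v <;> simp [setI, InstrBasicOK, NaBasic]

lemma prog_good {n : ℕ} (f : (Fin n → Bool) → Bool) (as : List (Fin n → Bool)) :
    ∀ u ∈ prog f as, InstrBasicOK NaBasic u ∧ ∀ l, u ≠ .jump l := by
  intro u hu
  rw [prog, List.mem_flatten] at hu
  obtain ⟨l, hl, hu⟩ := hu
  rw [List.mem_map] at hl
  obtain ⟨a, -, rfl⟩ := hl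
  rw [blockOf, List.mem_append] at hu
  rcases hu with hu | hu
  · rw [core, List.mem_flatten] at hu
    obtain ⟨l', hl', hu⟩ := hu
    rw [List.mem_map] at hl'
    obtain ⟨p, -, rfl⟩ := hl'
    rcases hu with  _ | ⟨_, _ | ⟨_, h⟩⟩
    · exact good_testI _ _
    · exact good_fixI
    · cases h
  · rcases hu with _ | ⟨_, _ | ⟨_, _ | ⟨_, h⟩⟩⟩
    · exact good_setI _
    · exact good_fixI
    · exact ⟨trivial, by simp⟩
    · cases h

lemma core_length (L : List (ℕ × Bool)) : (core L).length = 2 * L.length := by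
  induction L with
  | nil => rfl
  | cons p L ih => simp [ih]; ring

lemma blockOf_length {n : ℕ} (f : (Fin n → Bool) → Bool) (a : Fin n → Bool) :
    (blockOf f a).length = 2 * n + 3 := by
  simp [blockOf, core_length, pairsOf]

lemma prog_length {n : ℕ} (f : (Fin n → Bool) → Bool) (as : List (Fin n → Bool)) :
    (prog f as).length = as.length * (2 * n + 3) := by
  induction as with
  | nil => simp
  | cons a as ih => simp [ih, blockOf_length]; ring

end S2
-- AUX END

/-- Corollary 1 of the paper: every `n`-ary Boolean function is computed by an
instruction sequence from `IS_br^na` of length `O(n · 2^n)` containing no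
jump instructions at all. -/
theorem statement2 :
    ∃ c : ℕ, ∀ (n : ℕ) (f : (Fin n → Bool) → Bool),
      ∃ X : List PInstr, ISbrna X ∧
        (∀ l : ℕ, PInstr.jump l ∉ X) ∧
        Computes f X ∧ X.length ≤ c * (n * 2 ^ n + 1) := by
  refine ⟨5, fun n f => ?_⟩
  set as := (Finset.univ : Finset (Fin n → Bool)).toList with has
  refine ⟨S2.prog f as, ⟨?_, fun u hu => (S2.prog_good f as u hu).1⟩,
    fun l hl => (S2.prog_good f as _ hl).2 l rfl, ?_, ?_⟩
  · have hlen : (S2.prog f as).length = 2 ^ n * (2 * n + 3) := by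
      rw [S2.prog_length f as]; simp [has, Finset.length_toList]
    intro h
    rw [h] at hlen
    simp only [List.length_nil] at hlen
    have : 0 < 2 ^ n * (2 * n + 3) := by positivity
    omega
  · intro b
    apply S2.prog_exec f as b (by simp [has])
    intro i
    simp [initState, i.isLt]
  · rw [S2.prog_length f as]
    have : as.length = 2 ^ n := by simp [has, Finset.length_toList]
    rw [this]
    have h1 : 2 ^ n ≤ n * 2 ^ n + 1 := by
      cases n with
      | zero => simp
      | succ m =>
        have : 1 * 2 ^ (m+1) ≤ (m+1) * 2 ^ (m+1) :=
          Nat.mul_le_mul_right _ (by omega)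
        omega
    nlinarith [h1]
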